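/- Consider the generic channel H = Σ_{ℓ=1}^L √p_ℓ e^{-jβ_ℓ} (a_f(τ_ℓ) ⊗ a_t(ν_ℓ) ⊗ a_R(θ_ℓ^R) ⊗ a_T(θ_ℓ^T)) with all four steering vectors of exponential form a_m = e^{-j c m κ} in their respective domains. If, conditioned on side information z and on the parameter collection Ξ = {p_ℓ, τ_ℓ, ν_ℓ, θ_ℓ^R, θ_ℓ^T}, the phases β_ℓ are mutually independent and uniform on [0,2π], then E[H | z] = 0 and E[H H^H | z] lies in the set T_{M_SC} ⊗ T_{M_SN} ⊗ T_{M_R} ⊗ T_{M_T}, i.e., it is a (four-fold Kronecker) sum of Kronecker products of Toeplitz matrices. -/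

import Mathlib

open MeasureTheory ProbabilityTheory

/-- The uniform probability measure on the interval `[0, 2π]`. -/
noncomputable def uniformIcc : Measure ℝ :=
  (ENNReal.ofReal (2 * Real.pi))⁻¹ • (volume.restrict (Set.Icc 0 (2 * Real.pi)))

namespace Stmt9Aux

instance : IsProbabilityMeasure uniformIcc := by
  constructor
  rw [uniformIcc]
  simp only [Measure.smul_apply, Measure.restrict_apply MeasurableSet.univ, Set.univ_inter,
    Real.volume_Icc, smul_eq_mul, sub_zero]
  exact ENNReal.inv_mul_cancel (ENNReal.ofReal_pos.mpr (by positivity)).ne' ENNReal.ofReal_ne_top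

lemma integral_uniformIcc_exp (c : ℂ) (hc : c ≠ 0)
    (hper : Complex.exp (c * ((2 * Real.pi : ℝ) : ℂ)) = 1) :
    ∫ t : ℝ, Complex.exp (c * t) ∂uniformIcc = 0 := by
  rw [uniformIcc, integral_smul_measure]
  have h0 : (∫ t in Set.Icc (0:ℝ) (2 * Real.pi), Complex.exp (c * t)) = 0 := by
    rw [MeasureTheory.integral_Icc_eq_integral_Ioc,
      ← intervalIntegral.integral_of_le (by positivity : (0:ℝ) ≤ 2 * Real.pi),
      integral_exp_mul_complex hc, hper]
    simp
  rw [h0, smul_zero]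

lemma exp_neg_I_two_pi : Complex.exp ((-Complex.I) * ((2 * Real.pi : ℝ) : ℂ)) = 1 := by
  push_cast
  rw [show (-Complex.I) * (2 * (Real.pi : ℂ)) = -(2 * (Real.pi : ℂ) * Complex.I) by ring,
    Complex.exp_neg, Complex.exp_two_pi_mul_I, inv_one]

lemma exp_pos_I_two_pi : Complex.exp (Complex.I * ((2 * Real.pi : ℝ) : ℂ)) = 1 := by
  push_cast
  rw [show Complex.I * (2 * (Real.pi : ℂ)) = 2 * (Real.pi : ℂ) * Complex.I by ring,
    Complex.exp_two_pi_mul_I]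

lemma integral_uniformIcc_exp_neg :
    ∫ t : ℝ, Complex.exp (-(Complex.I * (t : ℂ))) ∂uniformIcc = 0 := by
  have h := integral_uniformIcc_exp (-Complex.I) (by simp [Complex.I_ne_zero]) exp_neg_I_two_pi
  simpa [neg_mul] using h

lemma integral_uniformIcc_exp_pos :
    ∫ t : ℝ, Complex.exp (Complex.I * (t : ℂ)) ∂uniformIcc = 0 :=
  integral_uniformIcc_exp Complex.I Complex.I_ne_zero exp_pos_I_two_pi

/-- Fubini for a product of one-variable functions over a finite power of a measure. -/
lemma integral_pi_prod {n : ℕ} (ν : Measure ℝ) [SigmaFinite ν] (f : Fin n → ℝ → ℂ) :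
    ∫ y : Fin n → ℝ, ∏ i, f i (y i) ∂(Measure.pi fun _ => ν) = ∏ i, ∫ t, f i t ∂ν := by
  induction n with
  | zero => simp [Measure.pi_of_empty (fun _ : Fin 0 => ν)]
  | succ n ih =>
    rw [← ((measurePreserving_piFinSuccAbove (fun _ : Fin (n+1) => ν) 0).symm).integral_comp']
    simp only [MeasurableEquiv.piFinSuccAbove_symm_apply, Fin.insertNthEquiv,
      Fin.prod_univ_succ, Fin.insertNth_zero, Equiv.coe_fn_mk, Fin.zero_succAbove, Fin.cons_succ,
      Fin.cons_zero, Function.comp_def, cast_eq]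
    rw [integral_prod_mul (f := fun x : ℝ => f 0 x)
      (g := fun x : Fin n → ℝ => ∏ i : Fin n, f i.succ (x i)), ih]

lemma meas_exp_neg {L : ℕ} (ℓ : Fin L) :
    Measurable fun y : Fin L → ℝ => Complex.exp (-(Complex.I * (y ℓ : ℂ))) :=
  Complex.continuous_exp.measurable.comp
    ((measurable_const.mul (Complex.measurable_ofReal.comp (measurable_pi_apply ℓ))).neg)

lemma meas_exp_pos {L : ℕ} (ℓ : Fin L) :
    Measurable fun y : Fin L → ℝ => Complex.exp (Complex.I * (y ℓ : ℂ)) :=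
  Complex.continuous_exp.measurable.comp
    (measurable_const.mul (Complex.measurable_ofReal.comp (measurable_pi_apply ℓ)))

lemma norm_exp_neg (r : ℝ) : ‖Complex.exp (-(Complex.I * (r : ℂ)))‖ = 1 := by
  simp [Complex.norm_exp]

lemma norm_exp_pos (r : ℝ) : ‖Complex.exp (Complex.I * (r : ℂ))‖ = 1 := by
  simp [Complex.norm_exp]

lemma integrable_single {L : ℕ} (ℓ : Fin L) :
    Integrable (fun y : Fin L → ℝ => Complex.exp (-(Complex.I * (y ℓ : ℂ))))
      (Measure.pi fun _ : Fin L => uniformIcc) :=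
  (integrable_const (1 : ℝ)).mono' (meas_exp_neg ℓ).aestronglyMeasurable
    (Filter.Eventually.of_forall fun y => le_of_eq (norm_exp_neg (y ℓ)))

lemma integrable_pair {L : ℕ} (ℓ ℓ' : Fin L) :
    Integrable (fun y : Fin L → ℝ =>
        Complex.exp (-(Complex.I * (y ℓ : ℂ))) * Complex.exp (Complex.I * (y ℓ' : ℂ)))
      (Measure.pi fun _ : Fin L => uniformIcc) :=
  (integrable_const (1 : ℝ)).mono' ((meas_exp_neg ℓ).mul (meas_exp_pos ℓ')).aestronglyMeasurable
    (Filter.Eventually.of_forall fun y => by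
      rw [norm_mul, norm_exp_neg, norm_exp_pos, mul_one])

lemma integral_pi_exp_single {L : ℕ} (ℓ : Fin L) :
    ∫ y : Fin L → ℝ, Complex.exp (-(Complex.I * (y ℓ : ℂ)))
      ∂(Measure.pi fun _ : Fin L => uniformIcc) = 0 := by
  have h : ∀ y : Fin L → ℝ, Complex.exp (-(Complex.I * (y ℓ : ℂ))) =
      ∏ k, (if k = ℓ then Complex.exp (-(Complex.I * (y k : ℂ))) else 1) := by
    intro y; simp [Finset.prod_ite_eq']
  simp_rw [h]
  rw [integral_pi_prod uniformIcc (f := fun k t => if k = ℓ then Complex.exp (-(Complex.I * (t : ℂ))) else 1)]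
  refine Finset.prod_eq_zero (Finset.mem_univ ℓ) ?_
  simp [integral_uniformIcc_exp_neg]

lemma integral_pi_exp_pair {L : ℕ} (ℓ ℓ' : Fin L) :
    ∫ y : Fin L → ℝ, Complex.exp (-(Complex.I * (y ℓ : ℂ))) * Complex.exp (Complex.I * (y ℓ' : ℂ))
      ∂(Measure.pi fun _ : Fin L => uniformIcc) = if ℓ = ℓ' then 1 else 0 := by
  have h : ∀ y : Fin L → ℝ,
      Complex.exp (-(Complex.I * (y ℓ : ℂ))) * Complex.exp (Complex.I * (y ℓ' : ℂ)) =
      ∏ k, ((if k = ℓ then Complex.exp (-(Complex.I * (y k : ℂ))) else 1) *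
            (if k = ℓ' then Complex.exp (Complex.I * (y k : ℂ)) else 1)) := by
    intro y; rw [Finset.prod_mul_distrib]; simp [Finset.prod_ite_eq']
  simp_rw [h]
  rw [integral_pi_prod uniformIcc (f := fun k t =>
    (if k = ℓ then Complex.exp (-(Complex.I * (t : ℂ))) else 1) *
    (if k = ℓ' then Complex.exp (Complex.I * (t : ℂ)) else 1))]
  by_cases hll : ℓ = ℓ'
  · subst hll
    simp only [eq_self_iff_true, if_true]
    refine Finset.prod_eq_one fun k _ => ?_
    by_cases hk : k = ℓ
    · subst hk
      simp only [eq_self_iff_true, if_true]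
      have h1 : ∀ t : ℝ, Complex.exp (-(Complex.I * (t : ℂ))) * Complex.exp (Complex.I * (t : ℂ))
          = 1 := by
        intro t; rw [← Complex.exp_add]; simp
      simp_rw [h1]
      simp
    · simp [hk]
  · simp only [if_neg hll]
    refine Finset.prod_eq_zero (Finset.mem_univ ℓ) ?_
    simp only [eq_self_iff_true, if_true, if_neg hll, mul_one]
    exact integral_uniformIcc_exp_neg

lemma conj_exp_neg (r : ℝ) :
    (starRingEnd ℂ) (Complex.exp (-(Complex.I * (r : ℂ)))) = Complex.exp (Complex.I * (r : ℂ)) := by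
  rw [← Complex.exp_conj]
  congr 1
  simp [Complex.conj_I]

/-- The non-random coefficient of path `ℓ` in the channel. -/
noncomputable def coefC (Δf ΔT : ℝ) {L MSC MSN MR MT : ℕ}
    (i : Fin MSC × Fin MSN × Fin MR × Fin MT) (ℓ : Fin L)
    (x : (Fin L → ℝ) × (Fin L → ℝ) × (Fin L → ℝ) × (Fin L → ℝ) × (Fin L → ℝ)) : ℂ :=
  (Real.sqrt (x.1 ℓ) : ℂ) *
    Complex.exp (-(Complex.I * ((2 * Real.pi * Δf * (i.1 : ℕ) * x.2.1 ℓ : ℝ) : ℂ))) *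
    Complex.exp (-(Complex.I * ((2 * Real.pi * ΔT * (i.2.1 : ℕ) * x.2.2.1 ℓ : ℝ) : ℂ))) *
    Complex.exp (-(Complex.I * ((Real.pi * (i.2.2.1 : ℕ) * Real.sin (x.2.2.2.1 ℓ) : ℝ) : ℂ))) *
    Complex.exp (-(Complex.I * ((Real.pi * (i.2.2.2 : ℕ) * Real.sin (x.2.2.2.2 ℓ) : ℝ) : ℂ)))

lemma measurable_coefC (Δf ΔT : ℝ) {L MSC MSN MR MT : ℕ}
    (i : Fin MSC × Fin MSN × Fin MR × Fin MT) (ℓ : Fin L) :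
    Measurable (coefC (L := L) Δf ΔT i ℓ) := by
  have hexp : ∀ {g : ((Fin L → ℝ) × (Fin L → ℝ) × (Fin L → ℝ) × (Fin L → ℝ) × (Fin L → ℝ)) → ℝ},
      Measurable g →
      Measurable fun x : (Fin L → ℝ) × (Fin L → ℝ) × (Fin L → ℝ) × (Fin L → ℝ) × (Fin L → ℝ) =>
        Complex.exp (-(Complex.I * ((g x : ℝ) : ℂ))) := fun hg =>
    Complex.continuous_exp.measurable.comp
      ((measurable_const.mul (Complex.measurable_ofReal.comp hg)).neg)
  unfold coefC
  refine ((((?_ : Measurable _).mul (hexp ?_)).mul (hexp ?_)).mul (hexp ?_)).mul (hexp ?_)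
  · exact Complex.measurable_ofReal.comp
      (Real.continuous_sqrt.measurable.comp ((measurable_pi_apply ℓ).comp measurable_fst))
  · exact ((measurable_pi_apply ℓ).comp (measurable_fst.comp measurable_snd)).const_mul _
  · exact ((measurable_pi_apply ℓ).comp
      (measurable_fst.comp (measurable_snd.comp measurable_snd))).const_mul _
  · exact ((Real.continuous_sin.measurable.comp ((measurable_pi_apply ℓ).comp
      (measurable_fst.comp (measurable_snd.comp (measurable_snd.comp measurable_snd))))).const_mul _)
  · exact ((Real.continuous_sin.measurable.comp ((measurable_pi_apply ℓ).comp
      (measurable_snd.comp (measurable_snd.comp (measurable_snd.comp measurable_snd))))).const_mul _)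

/-- The channel entry as a function of the parameters and the phases. -/
noncomputable def Ffun (Δf ΔT : ℝ) {L MSC MSN MR MT : ℕ} {Z : Type*}
    (i : Fin MSC × Fin MSN × Fin MR × Fin MT)
    (q : (Z × ((Fin L → ℝ) × (Fin L → ℝ) × (Fin L → ℝ) × (Fin L → ℝ) × (Fin L → ℝ)))
        × (Fin L → ℝ)) : ℂ :=
  ∑ ℓ : Fin L, coefC Δf ΔT i ℓ q.1.2 * Complex.exp (-(Complex.I * (q.2 ℓ : ℂ)))

lemma measurable_Ffun (Δf ΔT : ℝ) {L MSC MSN MR MT : ℕ} {Z : Type*} [MeasurableSpace Z]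
    (i : Fin MSC × Fin MSN × Fin MR × Fin MT) :
    Measurable (Ffun (Z := Z) (L := L) Δf ΔT i) := by
  unfold Ffun
  refine Finset.measurable_sum _ fun ℓ _ => Measurable.mul ?_ ?_
  · exact (measurable_coefC Δf ΔT i ℓ).comp (measurable_snd.comp measurable_fst)
  · exact (meas_exp_neg ℓ).comp measurable_snd

lemma integral_Ffun (Δf ΔT : ℝ) {L MSC MSN MR MT : ℕ} {Z : Type*}
    (i : Fin MSC × Fin MSN × Fin MR × Fin MT) (zv : Z)
    (x : (Fin L → ℝ) × (Fin L → ℝ) × (Fin L → ℝ) × (Fin L → ℝ) × (Fin L → ℝ)) :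
    ∫ y : Fin L → ℝ, Ffun Δf ΔT i ((zv, x), y) ∂(Measure.pi fun _ : Fin L => uniformIcc) = 0 := by
  unfold Ffun
  dsimp only
  rw [integral_finset_sum _ (fun ℓ _ => (integrable_single ℓ).const_mul _)]
  refine Finset.sum_eq_zero fun ℓ _ => ?_
  rw [integral_const_mul, integral_pi_exp_single, mul_zero]

lemma integral_Gfun (Δf ΔT : ℝ) {L MSC MSN MR MT : ℕ} {Z : Type*}
    (i j : Fin MSC × Fin MSN × Fin MR × Fin MT) (zv : Z)
    (x : (Fin L → ℝ) × (Fin L → ℝ) × (Fin L → ℝ) × (Fin L → ℝ) × (Fin L → ℝ)) :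
    ∫ y : Fin L → ℝ, Ffun Δf ΔT i ((zv, x), y) * (starRingEnd ℂ) (Ffun Δf ΔT j ((zv, x), y))
      ∂(Measure.pi fun _ : Fin L => uniformIcc) =
      ∑ ℓ : Fin L, coefC Δf ΔT i ℓ x * (starRingEnd ℂ) (coefC Δf ΔT j ℓ x) := by
  unfold Ffun
  dsimp only
  have hexp : ∀ y : Fin L → ℝ,
      (∑ ℓ : Fin L, coefC Δf ΔT i ℓ x * Complex.exp (-(Complex.I * (y ℓ : ℂ)))) *
        (starRingEnd ℂ)
          (∑ ℓ : Fin L, coefC Δf ΔT j ℓ x * Complex.exp (-(Complex.I * (y ℓ : ℂ)))) =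
      ∑ ℓ : Fin L, ∑ ℓ' : Fin L,
        (coefC Δf ΔT i ℓ x * (starRingEnd ℂ) (coefC Δf ΔT j ℓ' x)) *
          (Complex.exp (-(Complex.I * (y ℓ : ℂ))) * Complex.exp (Complex.I * (y ℓ' : ℂ))) := by
    intro y
    rw [map_sum, Finset.sum_mul_sum]
    refine Finset.sum_congr rfl fun ℓ _ => Finset.sum_congr rfl fun ℓ' _ => ?_
    rw [map_mul, conj_exp_neg]
    ring
  simp_rw [hexp]
  rw [integral_finset_sum _
    (fun ℓ _ => integrable_finset_sum _ (fun ℓ' _ => (integrable_pair ℓ ℓ').const_mul _))]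
  refine Finset.sum_congr rfl fun ℓ _ => ?_
  rw [integral_finset_sum _ (fun ℓ' _ => (integrable_pair ℓ ℓ').const_mul _)]
  simp_rw [integral_const_mul, integral_pi_exp_pair]
  simp [mul_ite, Finset.sum_ite_eq]

lemma prod_exp_comb (s t a1 a2 a3 a4 b1 b2 b3 b4 : ℂ) :
    (s * Complex.exp a1 * Complex.exp a2 * Complex.exp a3 * Complex.exp a4) *
    (t * Complex.exp b1 * Complex.exp b2 * Complex.exp b3 * Complex.exp b4) =
    s * t * Complex.exp ((a1 + b1) + (a2 + b2) + (a3 + b3) + (a4 + b4)) := by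
  simp only [Complex.exp_add]; ring

lemma pair_arg_eq (A B : ℝ) (m m' n n' : ℕ) (h : (m : ℤ) - m' = (n : ℤ) - n') :
    -(Complex.I * ((A * m * B : ℝ) : ℂ)) + Complex.I * ((A * m' * B : ℝ) : ℂ) =
    -(Complex.I * ((A * n * B : ℝ) : ℂ)) + Complex.I * ((A * n' * B : ℝ) : ℂ) := by
  have h' : (m : ℂ) - m' = (n : ℂ) - n' := by exact_mod_cast congrArg (fun t : ℤ => (t : ℂ)) h
  push_cast
  linear_combination (-(Complex.I * (A : ℂ) * (B : ℂ))) * h'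

lemma coef_pair_eq (Δf ΔT : ℝ) {L MSC MSN MR MT : ℕ}
    (i j i' j' : Fin MSC × Fin MSN × Fin MR × Fin MT)
    (h1 : ((i.1 : ℕ) : ℤ) - ((j.1 : ℕ) : ℤ) = ((i'.1 : ℕ) : ℤ) - ((j'.1 : ℕ) : ℤ))
    (h2 : ((i.2.1 : ℕ) : ℤ) - ((j.2.1 : ℕ) : ℤ) = ((i'.2.1 : ℕ) : ℤ) - ((j'.2.1 : ℕ) : ℤ))
    (h3 : ((i.2.2.1 : ℕ) : ℤ) - ((j.2.2.1 : ℕ) : ℤ)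
        = ((i'.2.2.1 : ℕ) : ℤ) - ((j'.2.2.1 : ℕ) : ℤ))
    (h4 : ((i.2.2.2 : ℕ) : ℤ) - ((j.2.2.2 : ℕ) : ℤ)
        = ((i'.2.2.2 : ℕ) : ℤ) - ((j'.2.2.2 : ℕ) : ℤ))
    (ℓ : Fin L)
    (x : (Fin L → ℝ) × (Fin L → ℝ) × (Fin L → ℝ) × (Fin L → ℝ) × (Fin L → ℝ)) :
    coefC Δf ΔT i ℓ x * (starRingEnd ℂ) (coefC Δf ΔT j ℓ x) =
    coefC Δf ΔT i' ℓ x * (starRingEnd ℂ) (coefC Δf ΔT j' ℓ x) := by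
  unfold coefC
  simp only [map_mul, Complex.conj_ofReal, conj_exp_neg]
  rw [prod_exp_comb, prod_exp_comb]
  congr 1
  rw [pair_arg_eq (2 * Real.pi * Δf) (x.2.1 ℓ) _ _ _ _ h1,
    pair_arg_eq (2 * Real.pi * ΔT) (x.2.2.1 ℓ) _ _ _ _ h2,
    pair_arg_eq Real.pi (Real.sin (x.2.2.2.1 ℓ)) _ _ _ _ h3,
    pair_arg_eq Real.pi (Real.sin (x.2.2.2.2 ℓ)) _ _ _ _ h4]

end Stmt9Aux

open Stmt9Aux in
/-- **Theorem 1.** -/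
theorem stmt_9 {Ω Z : Type*} [MeasurableSpace Ω] [MeasurableSpace Z]
    (μ : Measure Ω) [IsProbabilityMeasure μ]
    (L MSC MSN MR MT : ℕ) (Δf ΔT : ℝ) (hΔf : 0 < Δf) (hΔT : 0 < ΔT)
    (p τ ν θR θT β : Fin L → Ω → ℝ)
    (hp : ∀ ℓ ω, 0 ≤ p ℓ ω)
    (hpmeas : ∀ ℓ, Measurable (p ℓ)) (hτmeas : ∀ ℓ, Measurable (τ ℓ))
    (hνmeas : ∀ ℓ, Measurable (ν ℓ)) (hθRmeas : ∀ ℓ, Measurable (θR ℓ))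
    (hθTmeas : ∀ ℓ, Measurable (θT ℓ)) (hβmeas : ∀ ℓ, Measurable (β ℓ))
    (z : Ω → Z) (hz : Measurable z)
    -- the collected channel parameters Ξ
    (Ξ : Ω → (Fin L → ℝ) × (Fin L → ℝ) × (Fin L → ℝ) × (Fin L → ℝ) × (Fin L → ℝ))
    (hΞ : ∀ ω, Ξ ω =
      (fun i => p i ω, fun i => τ i ω, fun i => ν i ω, fun i => θR i ω, fun i => θT i ω))
    -- conditioned on (z, Ξ), the phases β_ℓ are i.i.d. uniform on [0, 2π]
    (hβ : ∀ᵐ ω ∂μ,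
      condDistrib (fun ω' (i : Fin L) => β i ω') (fun ω' => (z ω', Ξ ω')) μ (z ω, Ξ ω) =
        Measure.pi (fun _ : Fin L => uniformIcc))
    -- the channel tensor
    (H : Ω → Fin MSC × Fin MSN × Fin MR × Fin MT → ℂ)
    (hH : ∀ ω i, H ω i = ∑ ℓ : Fin L,
      (Real.sqrt (p ℓ ω) : ℂ) * Complex.exp (-(Complex.I * (β ℓ ω : ℂ))) *
        Complex.exp (-(Complex.I * ((2 * Real.pi * Δf * (i.1 : ℕ) * τ ℓ ω : ℝ) : ℂ))) *
        Complex.exp (-(Complex.I * ((2 * Real.pi * ΔT * (i.2.1 : ℕ) * ν ℓ ω : ℝ) : ℂ))) *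
        Complex.exp (-(Complex.I * ((Real.pi * (i.2.2.1 : ℕ) * Real.sin (θR ℓ ω) : ℝ) : ℂ))) *
        Complex.exp (-(Complex.I * ((Real.pi * (i.2.2.2 : ℕ) * Real.sin (θT ℓ ω) : ℝ) : ℂ))))
    (hint : ∀ i, Integrable (fun ω => H ω i) μ)
    (hint2 : ∀ i j, Integrable (fun ω => H ω i * (starRingEnd ℂ) (H ω j)) μ) :
    -- E[H | z] = 0
    (∀ i, μ[(fun ω => H ω i) | MeasurableSpace.comap z inferInstance] =ᵐ[μ] 0) ∧
    -- E[H Hᴴ | z] is block-Toeplitz at all four levels: entries depend only on the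
    -- four index differences
    (∀ i j i' j' : Fin MSC × Fin MSN × Fin MR × Fin MT,
      ((i.1 : ℕ) : ℤ) - ((j.1 : ℕ) : ℤ) = ((i'.1 : ℕ) : ℤ) - ((j'.1 : ℕ) : ℤ) →
      ((i.2.1 : ℕ) : ℤ) - ((j.2.1 : ℕ) : ℤ) = ((i'.2.1 : ℕ) : ℤ) - ((j'.2.1 : ℕ) : ℤ) →
      ((i.2.2.1 : ℕ) : ℤ) - ((j.2.2.1 : ℕ) : ℤ) = ((i'.2.2.1 : ℕ) : ℤ) - ((j'.2.2.1 : ℕ) : ℤ) →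
      ((i.2.2.2 : ℕ) : ℤ) - ((j.2.2.2 : ℕ) : ℤ) = ((i'.2.2.2 : ℕ) : ℤ) - ((j'.2.2.2 : ℕ) : ℤ) →
      μ[(fun ω => H ω i * (starRingEnd ℂ) (H ω j)) | MeasurableSpace.comap z inferInstance]
        =ᵐ[μ]
      μ[(fun ω => H ω i' * (starRingEnd ℂ) (H ω j')) |
        MeasurableSpace.comap z inferInstance]) := by
  classical
  have hΞmeas : Measurable Ξ := by
    have hfe : Ξ = fun ω =>
        ((fun i => p i ω, fun i => τ i ω, fun i => ν i ω, fun i => θR i ω, fun i => θT i ω) :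
          (Fin L → ℝ) × (Fin L → ℝ) × (Fin L → ℝ) × (Fin L → ℝ) × (Fin L → ℝ)) := funext hΞ
    rw [hfe]
    exact (measurable_pi_lambda _ fun i => hpmeas i).prodMk
      ((measurable_pi_lambda _ fun i => hτmeas i).prodMk
        ((measurable_pi_lambda _ fun i => hνmeas i).prodMk
          ((measurable_pi_lambda _ fun i => hθRmeas i).prodMk
            (measurable_pi_lambda _ fun i => hθTmeas i))))
  have hX : Measurable (fun ω' => (z ω', Ξ ω')) := hz.prodMk hΞmeas
  have hY : Measurable (fun ω' (k : Fin L) => β k ω') :=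
    measurable_pi_lambda _ fun k => hβmeas k
  have hle : MeasurableSpace.comap z inferInstance ≤
      MeasurableSpace.comap (fun ω' => (z ω', Ξ ω')) inferInstance := by
    have : MeasurableSpace.comap z inferInstance =
        MeasurableSpace.comap (fun ω' => (z ω', Ξ ω'))
          (MeasurableSpace.comap Prod.fst inferInstance) :=
      (MeasurableSpace.comap_comp (f := Prod.fst) (g := fun ω' => (z ω', Ξ ω'))).symm
    rw [this]
    exact MeasurableSpace.comap_mono measurable_fst.comap_le
  have hXle : MeasurableSpace.comap (fun ω' => (z ω', Ξ ω')) inferInstance ≤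
      (inferInstance : MeasurableSpace Ω) := hX.comap_le
  -- pointwise identification of H with Ffun
  have hrw : ∀ (i : Fin MSC × Fin MSN × Fin MR × Fin MT) (a : Ω),
      Ffun Δf ΔT i ((z a, Ξ a), fun k => β k a) = H a i := by
    intro i a
    rw [hH, hΞ]
    unfold Ffun coefC
    dsimp only
    exact Finset.sum_congr rfl fun ℓ _ => by ring
  -- conditional expectation given (z, Ξ)
  have key1 : ∀ (i : Fin MSC × Fin MSN × Fin MR × Fin MT),
      μ[(fun ω => H ω i) | MeasurableSpace.comap (fun ω' => (z ω', Ξ ω')) inferInstance]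
        =ᵐ[μ] 0 := by
    intro i
    have e1 : (fun ω => H ω i) =ᵐ[μ]
        (fun a => Ffun Δf ΔT i ((z a, Ξ a), fun k => β k a)) :=
      Filter.Eventually.of_forall fun a => (hrw i a).symm
    have hfint : Integrable (fun a => Ffun Δf ΔT i ((z a, Ξ a), fun k => β k a)) μ :=
      (hint i).congr e1
    have h1 := condExp_prod_ae_eq_integral_condDistrib (μ := μ)
      (X := fun ω' => (z ω', Ξ ω')) (Y := fun ω' (k : Fin L) => β k ω')
      (f := Ffun Δf ΔT i) hX hY.aemeasurable
      (measurable_Ffun Δf ΔT i).stronglyMeasurable hfint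
    calc μ[(fun ω => H ω i) | MeasurableSpace.comap (fun ω' => (z ω', Ξ ω')) inferInstance]
        =ᵐ[μ] μ[(fun a => Ffun Δf ΔT i ((z a, Ξ a), fun k => β k a)) |
          MeasurableSpace.comap (fun ω' => (z ω', Ξ ω')) inferInstance] :=
          condExp_congr_ae e1
      _ =ᵐ[μ] (fun a => ∫ y, Ffun Δf ΔT i ((z a, Ξ a), y)
          ∂(condDistrib (fun ω' (k : Fin L) => β k ω') (fun ω' => (z ω', Ξ ω')) μ
            (z a, Ξ a))) := h1
      _ =ᵐ[μ] 0 := by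
          filter_upwards [hβ] with ω hω
          simp only [Pi.zero_apply]
          rw [hω]
          exact integral_Ffun Δf ΔT i (z ω) (Ξ ω)
  have key2 : ∀ (i j : Fin MSC × Fin MSN × Fin MR × Fin MT),
      μ[(fun ω => H ω i * (starRingEnd ℂ) (H ω j)) |
        MeasurableSpace.comap (fun ω' => (z ω', Ξ ω')) inferInstance]
      =ᵐ[μ] (fun a => ∑ ℓ : Fin L,
        coefC Δf ΔT i ℓ (Ξ a) * (starRingEnd ℂ) (coefC Δf ΔT j ℓ (Ξ a))) := by
    intro i j
    have e1 : (fun ω => H ω i * (starRingEnd ℂ) (H ω j)) =ᵐ[μ]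
        (fun a => Ffun Δf ΔT i ((z a, Ξ a), fun k => β k a) *
          (starRingEnd ℂ) (Ffun Δf ΔT j ((z a, Ξ a), fun k => β k a))) :=
      Filter.Eventually.of_forall fun a => by dsimp only; rw [hrw i a, hrw j a]
    have hfint : Integrable (fun a => Ffun Δf ΔT i ((z a, Ξ a), fun k => β k a) *
        (starRingEnd ℂ) (Ffun Δf ΔT j ((z a, Ξ a), fun k => β k a))) μ :=
      (hint2 i j).congr e1
    have hmeasG : Measurable (fun q => Ffun (Z := Z) (L := L) Δf ΔT i q *
        (starRingEnd ℂ) (Ffun Δf ΔT j q)) := by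
      refine (measurable_Ffun Δf ΔT i).mul ?_
      exact Complex.continuous_conj.measurable.comp (measurable_Ffun Δf ΔT j)
    have h1 := condExp_prod_ae_eq_integral_condDistrib (μ := μ)
      (X := fun ω' => (z ω', Ξ ω')) (Y := fun ω' (k : Fin L) => β k ω')
      (f := fun q => Ffun Δf ΔT i q * (starRingEnd ℂ) (Ffun Δf ΔT j q))
      hX hY.aemeasurable hmeasG.stronglyMeasurable hfint
    calc μ[(fun ω => H ω i * (starRingEnd ℂ) (H ω j)) |
          MeasurableSpace.comap (fun ω' => (z ω', Ξ ω')) inferInstance]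
        =ᵐ[μ] μ[(fun a => Ffun Δf ΔT i ((z a, Ξ a), fun k => β k a) *
            (starRingEnd ℂ) (Ffun Δf ΔT j ((z a, Ξ a), fun k => β k a))) |
          MeasurableSpace.comap (fun ω' => (z ω', Ξ ω')) inferInstance] :=
          condExp_congr_ae e1
      _ =ᵐ[μ] (fun a => ∫ y, Ffun Δf ΔT i ((z a, Ξ a), y) *
            (starRingEnd ℂ) (Ffun Δf ΔT j ((z a, Ξ a), y))
          ∂(condDistrib (fun ω' (k : Fin L) => β k ω') (fun ω' => (z ω', Ξ ω')) μ
            (z a, Ξ a))) := h1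
      _ =ᵐ[μ] (fun a => ∑ ℓ : Fin L,
            coefC Δf ΔT i ℓ (Ξ a) * (starRingEnd ℂ) (coefC Δf ΔT j ℓ (Ξ a))) := by
          filter_upwards [hβ] with ω hω
          rw [hω]
          exact integral_Gfun Δf ΔT i j (z ω) (Ξ ω)
  constructor
  · intro i
    have tower := condExp_condExp_of_le (μ := μ) (f := fun ω => H ω i) hle hXle
    refine tower.symm.trans ?_
    have := condExp_congr_ae (m := MeasurableSpace.comap z inferInstance) (μ := μ) (key1 i)
    refine this.trans ?_
    rw [condExp_zero]
  · intro i j i' j' h1 h2 h3 h4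
    have heq : (fun a => ∑ ℓ : Fin L,
        coefC Δf ΔT i ℓ (Ξ a) * (starRingEnd ℂ) (coefC Δf ΔT j ℓ (Ξ a))) =
        (fun a => ∑ ℓ : Fin L,
        coefC Δf ΔT i' ℓ (Ξ a) * (starRingEnd ℂ) (coefC Δf ΔT j' ℓ (Ξ a))) := by
      funext a
      exact Finset.sum_congr rfl fun ℓ _ => coef_pair_eq Δf ΔT i j i' j' h1 h2 h3 h4 ℓ (Ξ a)
    have hmid : μ[(fun ω => H ω i * (starRingEnd ℂ) (H ω j)) |
          MeasurableSpace.comap (fun ω' => (z ω', Ξ ω')) inferInstance]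
        =ᵐ[μ] μ[(fun ω => H ω i' * (starRingEnd ℂ) (H ω j')) |
          MeasurableSpace.comap (fun ω' => (z ω', Ξ ω')) inferInstance] := by
      refine (key2 i j).trans ?_
      rw [heq]
      exact (key2 i' j').symm
    have tower1 := condExp_condExp_of_le (μ := μ)
      (f := fun ω => H ω i * (starRingEnd ℂ) (H ω j)) hle hXle
    have tower2 := condExp_condExp_of_le (μ := μ)
      (f := fun ω => H ω i' * (starRingEnd ℂ) (H ω j')) hle hXle
    exact tower1.symm.trans
      ((condExp_congr_ae (m := MeasurableSpace.comap z inferInstance) hmid).trans tower2)
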